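/- Let (v_j)_{j=1,…,n} be vectors in an inner product space depending Lipschitz-continuously on a parameter g in a metric space (i.e., ‖v_j(g₁) − v_j(g₂)‖ ≤ L·d(g₁,g₂)), such that the Gram matrix G(g) = (⟨v_i(g), v_j(g)⟩) is uniformly positive definite. Then the orthonormal basis obtained by Gram–Schmidt orthonormalization also depends Lipschitz-continuously on g (with a possibly larger constant), locally on the parameter space. -/

import Mathlib

open Finset
open InnerProductSpace

section Aux

variable {H : Type*} [NormedAddCommGroup H] [InnerProductSpace ℝ H]

private lemma aux_norm_sq_sum_smul {n : ℕ} (w : Fin n → H) (c : Fin n → ℝ) :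
    ‖∑ i, c i • w i‖ ^ 2 = ∑ i, ∑ j, c i * c j * (inner ℝ (w i) (w j) : ℝ) := by
  rw [← real_inner_self_eq_norm_sq, sum_inner]
  refine Finset.sum_congr rfl fun i _ => ?_
  rw [inner_sum]
  refine Finset.sum_congr rfl fun j _ => ?_
  rw [real_inner_smul_left, real_inner_smul_right]; ring

private lemma aux_norm_normalize_sub {x y : H} {r : ℝ} (hr : 0 < r)
    (hx : r ≤ ‖x‖) (hy : r ≤ ‖y‖) :
    ‖‖x‖⁻¹ • x - ‖y‖⁻¹ • y‖ ≤ (2 / r) * ‖x - y‖ := by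
  have hx0 : (0:ℝ) < ‖x‖ := lt_of_lt_of_le hr hx
  have hy0 : (0:ℝ) < ‖y‖ := lt_of_lt_of_le hr hy
  have heq : ‖x‖⁻¹ • x - ‖y‖⁻¹ • y = ‖x‖⁻¹ • (x - y) + (‖x‖⁻¹ - ‖y‖⁻¹) • y := by module
  rw [heq]
  have h1 : ‖‖x‖⁻¹ • (x - y)‖ = ‖x - y‖ / ‖x‖ := by
    rw [norm_smul, Real.norm_eq_abs, abs_of_pos (inv_pos.2 hx0), inv_mul_eq_div]
  have h3 : ‖(‖x‖⁻¹ - ‖y‖⁻¹) • y‖ ≤ ‖x - y‖ / ‖x‖ := by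
    rw [norm_smul, Real.norm_eq_abs]
    have hxy : ‖x‖⁻¹ - ‖y‖⁻¹ = (‖y‖ - ‖x‖) / (‖x‖ * ‖y‖) := by field_simp
    rw [hxy, abs_div, abs_of_pos (mul_pos hx0 hy0)]
    have habs : |‖y‖ - ‖x‖| ≤ ‖x - y‖ := by
      rw [abs_sub_comm]; exact abs_norm_sub_norm_le x y
    rw [div_mul_eq_mul_div, div_le_div_iff₀ (mul_pos hx0 hy0) hx0]
    calc |‖y‖ - ‖x‖| * ‖y‖ * ‖x‖ ≤ ‖x - y‖ * ‖y‖ * ‖x‖ := by gcongr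
      _ = ‖x - y‖ * (‖x‖ * ‖y‖) := by ring
  calc ‖‖x‖⁻¹ • (x - y) + (‖x‖⁻¹ - ‖y‖⁻¹) • y‖
      ≤ ‖‖x‖⁻¹ • (x - y)‖ + ‖(‖x‖⁻¹ - ‖y‖⁻¹) • y‖ := norm_add_le _ _
    _ ≤ ‖x - y‖ / ‖x‖ + ‖x - y‖ / ‖x‖ := by rw [h1]; exact add_le_add le_rfl h3
    _ = 2 * ‖x - y‖ / ‖x‖ := by ring
    _ ≤ 2 * ‖x - y‖ / r := by gcongr
    _ = (2 / r) * ‖x - y‖ := by ring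

open Submodule in
private lemma aux_gs_lower {n : ℕ} [WellFoundedLT (Fin n)] (w : Fin n → H)
    (lam : ℝ) (hlam : 0 ≤ lam)
    (hG : ∀ c : Fin n → ℝ,
      lam * ∑ i, (c i) ^ 2 ≤ ∑ i, ∑ j, c i * c j * (inner ℝ (w i) (w j) : ℝ))
    (j : Fin n) : lam ≤ ‖gramSchmidt ℝ w j‖ ^ 2 := by
  classical
  have hmem : w j - gramSchmidt ℝ w j ∈ span ℝ (w '' ↑(Finset.Iio j)) := by
    have h := gramSchmidt_def ℝ w j
    have heq : w j - gramSchmidt ℝ w j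
        = ∑ i ∈ Finset.Iio j, (ℝ ∙ gramSchmidt ℝ w i).starProjection (w j) := by
      rw [h]; abel
    rw [heq]
    refine Submodule.sum_mem _ fun i hi => ?_
    have hi' : i < j := Finset.mem_Iio.1 hi
    have h1 : (ℝ ∙ gramSchmidt ℝ w i).starProjection (w j)
        ∈ (ℝ ∙ gramSchmidt ℝ w i) := Submodule.starProjection_apply_mem _ _
    have h2 : (ℝ ∙ gramSchmidt ℝ w i) ≤ span ℝ (w '' ↑(Finset.Iio j)) := by
      rw [Submodule.span_singleton_le_iff_mem]
      refine span_mono ?_ (gramSchmidt_mem_span ℝ w (le_refl i))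
      rintro x ⟨k, hk, rfl⟩
      exact ⟨k, by simpa using lt_of_le_of_lt hk hi', rfl⟩
    exact h2 h1
  rw [Set.image_eq_range, mem_span_range_iff_exists_fun] at hmem
  obtain ⟨c, hc⟩ := hmem
  set c' : Fin n → ℝ := fun i => if h : i < j then c ⟨i, by simpa using h⟩ else 0 with hc'def
  have hc'sum : ∑ i, c' i • w i = w j - gramSchmidt ℝ w j := by
    rw [← hc]
    calc ∑ i, c' i • w i = ∑ i ∈ Finset.Iio j, c' i • w i := by
          refine (Finset.sum_subset (Finset.subset_univ _) fun i _ hi => ?_).symm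
          have : ¬ i < j := fun h => hi (Finset.mem_Iio.2 h)
          simp [hc'def, this]
      _ = ∑ i : ((Finset.Iio j : Finset (Fin n)) : Set (Fin n)), c' ↑i • w ↑i :=
          (Finset.sum_finset_coe (f := fun i => c' i • w i) _).symm
      _ = ∑ i : ((Finset.Iio j : Finset (Fin n)) : Set (Fin n)), c i • w ↑i := by
          refine Finset.sum_congr rfl fun i _ => ?_
          have hi' : (i : Fin n) < j := by simpa using i.2
          simp only [hc'def, dif_pos hi']
  set d : Fin n → ℝ := fun i => (if i = j then 1 else 0) - c' i with hddef
  have hdsum : ∑ i, d i • w i = gramSchmidt ℝ w j := by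
    have hterm : ∀ i, d i • w i = (if i = j then w i else 0) - c' i • w i := by
      intro i
      by_cases h : i = j <;> simp [hddef, h, sub_smul]
    simp_rw [hterm, Finset.sum_sub_distrib, Finset.sum_ite_eq' Finset.univ j,
      Finset.mem_univ, if_pos, hc'sum]
    abel
  have hdj : d j = 1 := by
    have : ¬ j < j := lt_irrefl j
    simp [hddef, hc'def, this]
  have h1 : (1:ℝ) ≤ ∑ i, d i ^ 2 := by
    have := Finset.single_le_sum (f := fun i => d i ^ 2)
      (fun i _ => sq_nonneg (d i)) (Finset.mem_univ j)
    simpa [hdj] using this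
  calc lam = lam * 1 := (mul_one lam).symm
    _ ≤ lam * ∑ i, d i ^ 2 := mul_le_mul_of_nonneg_left h1 hlam
    _ ≤ ∑ i, ∑ k, d i * d k * (inner ℝ (w i) (w k) : ℝ) := hG d
    _ = ‖∑ i, d i • w i‖ ^ 2 := (aux_norm_sq_sum_smul w d).symm
    _ = ‖gramSchmidt ℝ w j‖ ^ 2 := by rw [hdsum]

open Submodule in
private lemma aux_gs_formula {n : ℕ} [WellFoundedLT (Fin n)] (w : Fin n → H) (j : Fin n)
    (hne : ∀ i, i < j → gramSchmidt ℝ w i ≠ 0) :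
    gramSchmidt ℝ w j = w j - ∑ i ∈ Finset.Iio j,
      (inner ℝ (gramSchmidtNormed ℝ w i) (w j) : ℝ) • gramSchmidtNormed ℝ w i := by
  have h := (gramSchmidt_def'' ℝ w j).symm
  have h2 := eq_sub_of_add_eq h
  rw [h2]
  congr 1
  refine Finset.sum_congr rfl fun i hi => ?_
  have hne' : gramSchmidt ℝ w i ≠ 0 := hne i (Finset.mem_Iio.1 hi)
  have hn : ‖gramSchmidt ℝ w i‖ ≠ 0 := norm_ne_zero_iff.2 hne'
  simp only [gramSchmidtNormed, real_inner_smul_left, smul_smul, RCLike.ofReal_real_eq_id,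
    id_eq]
  congr 1
  field_simp [sq]

private lemma aux_term_bound {N₁ N₂ a₁ a₂ : H} {M D e : ℝ}
    (hN₁ : ‖N₁‖ = 1) (hN₂ : ‖N₂‖ = 1) (ha₁ : ‖a₁‖ ≤ M) (ha₂ : ‖a₂‖ ≤ M)
    (hΔa : ‖a₁ - a₂‖ ≤ D) (hΔN : ‖N₁ - N₂‖ ≤ e) :
    ‖(inner ℝ N₁ a₁ : ℝ) • N₁ - (inner ℝ N₂ a₂ : ℝ) • N₂‖ ≤ 2 * M * e + D := by
  set p : ℝ := inner ℝ N₁ a₁ with hp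
  set q : ℝ := inner ℝ N₂ a₂ with hq
  have he0 : 0 ≤ e := le_trans (norm_nonneg _) hΔN
  have hM0 : 0 ≤ M := le_trans (norm_nonneg _) ha₁
  have hD0 : 0 ≤ D := le_trans (norm_nonneg _) hΔa
  have heq : p • N₁ - q • N₂ = (p - q) • N₁ + q • (N₁ - N₂) := by module
  have hpq : |p - q| ≤ e * M + D := by
    have h1 : p - q = (inner ℝ (N₁ - N₂) a₁ : ℝ) + (inner ℝ N₂ (a₁ - a₂) : ℝ) := by
      rw [inner_sub_left, inner_sub_right, hp, hq]; ring
    calc |p - q| ≤ |(inner ℝ (N₁ - N₂) a₁ : ℝ)| + |(inner ℝ N₂ (a₁ - a₂) : ℝ)| := by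
          rw [h1]; exact abs_add_le _ _
      _ ≤ ‖N₁ - N₂‖ * ‖a₁‖ + ‖N₂‖ * ‖a₁ - a₂‖ :=
          add_le_add (abs_real_inner_le_norm _ _) (abs_real_inner_le_norm _ _)
      _ ≤ e * M + 1 * D := by
          refine add_le_add (mul_le_mul hΔN ha₁ (norm_nonneg _) he0) ?_
          rw [hN₂]
          exact mul_le_mul le_rfl hΔa (norm_nonneg _) zero_le_one
      _ = e * M + D := by ring
  have hqb : |q| ≤ M := by
    calc |q| ≤ ‖N₂‖ * ‖a₂‖ := abs_real_inner_le_norm _ _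
      _ = ‖a₂‖ := by rw [hN₂, one_mul]
      _ ≤ M := ha₂
  calc ‖p • N₁ - q • N₂‖ = ‖(p - q) • N₁ + q • (N₁ - N₂)‖ := by rw [heq]
    _ ≤ ‖(p - q) • N₁‖ + ‖q • (N₁ - N₂)‖ := norm_add_le _ _
    _ = |p - q| * ‖N₁‖ + |q| * ‖N₁ - N₂‖ := by
        rw [norm_smul, norm_smul, Real.norm_eq_abs, Real.norm_eq_abs]
    _ ≤ (e * M + D) * 1 + M * e := by
        refine add_le_add ?_ (mul_le_mul hqb hΔN (norm_nonneg _) hM0)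
        rw [hN₁]
        exact mul_le_mul hpq le_rfl zero_le_one (add_nonneg (mul_nonneg he0 hM0) hD0)
    _ = 2 * M * e + D := by ring

private lemma aux_gs_sub_bound {n : ℕ} [WellFoundedLT (Fin n)] (w₁ w₂ : Fin n → H) (j : Fin n)
    {M D : ℝ} {E : Fin n → ℝ}
    (hne₁ : ∀ i, i < j → gramSchmidt ℝ w₁ i ≠ 0) (hne₂ : ∀ i, i < j → gramSchmidt ℝ w₂ i ≠ 0)
    (hM1 : ∀ i, ‖w₁ i‖ ≤ M) (hM2 : ∀ i, ‖w₂ i‖ ≤ M)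
    (hD : ∀ i, ‖w₁ i - w₂ i‖ ≤ D)
    (hE : ∀ i, i < j → ‖gramSchmidtNormed ℝ w₁ i - gramSchmidtNormed ℝ w₂ i‖ ≤ E i) :
    ‖gramSchmidt ℝ w₁ j - gramSchmidt ℝ w₂ j‖
      ≤ D + ∑ i ∈ Finset.Iio j, (2 * M * E i + D) := by
  have hN₁ : ∀ i, i < j → ‖gramSchmidtNormed ℝ w₁ i‖ = 1 := fun i hi =>
    gramSchmidtNormed_unit_length' (by
      simp only [gramSchmidtNormed]
      exact smul_ne_zero (by simpa using norm_ne_zero_iff.2 (hne₁ i hi)) (hne₁ i hi))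
  have hN₂ : ∀ i, i < j → ‖gramSchmidtNormed ℝ w₂ i‖ = 1 := fun i hi =>
    gramSchmidtNormed_unit_length' (by
      simp only [gramSchmidtNormed]
      exact smul_ne_zero (by simpa using norm_ne_zero_iff.2 (hne₂ i hi)) (hne₂ i hi))
  rw [aux_gs_formula w₁ j hne₁, aux_gs_formula w₂ j hne₂]
  have key : ∀ (a b : H) (f g : Fin n → H),
      (a - ∑ i ∈ Finset.Iio j, f i) - (b - ∑ i ∈ Finset.Iio j, g i)
        = (a - b) - ∑ i ∈ Finset.Iio j, (f i - g i) := by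
    intro a b f g
    rw [Finset.sum_sub_distrib]; abel
  rw [key]
  calc ‖(w₁ j - w₂ j) - ∑ i ∈ Finset.Iio j,
          ((inner ℝ (gramSchmidtNormed ℝ w₁ i) (w₁ j) : ℝ) • gramSchmidtNormed ℝ w₁ i
            - (inner ℝ (gramSchmidtNormed ℝ w₂ i) (w₂ j) : ℝ) • gramSchmidtNormed ℝ w₂ i)‖
      ≤ ‖w₁ j - w₂ j‖ + ‖∑ i ∈ Finset.Iio j,
          ((inner ℝ (gramSchmidtNormed ℝ w₁ i) (w₁ j) : ℝ) • gramSchmidtNormed ℝ w₁ i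
            - (inner ℝ (gramSchmidtNormed ℝ w₂ i) (w₂ j) : ℝ) • gramSchmidtNormed ℝ w₂ i)‖ :=
        norm_sub_le _ _
    _ ≤ D + ∑ i ∈ Finset.Iio j, (2 * M * E i + D) := by
        refine add_le_add (hD j) ?_
        refine le_trans (norm_sum_le _ _) (Finset.sum_le_sum fun i hi => ?_)
        exact aux_term_bound (hN₁ i (Finset.mem_Iio.1 hi)) (hN₂ i (Finset.mem_Iio.1 hi))
          (hM1 j) (hM2 j) (hD j) (hE i (Finset.mem_Iio.1 hi))

end Aux

theorem gramSchmidt_lipschitz_in_parameter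
    {H : Type*} [NormedAddCommGroup H] [InnerProductSpace ℝ H]
    {W : Type*} [MetricSpace W]
    {n : ℕ} [NeZero n] (v : W → Fin n → H) (L lam : ℝ)
    (hlam : 0 < lam)
    (hLip : ∀ j : Fin n, ∀ g₁ g₂ : W,
        ‖v g₁ j - v g₂ j‖ ≤ L * dist g₁ g₂)
    (hGram : ∀ g : W, ∀ c : Fin n → ℝ,
        lam * ∑ i, (c i) ^ 2 ≤
          ∑ i, ∑ j, c i * c j * (inner ℝ (v g i) (v g j) : ℝ)) :
    haveI : WellFoundedLT (Fin n) := inferInstance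
    ∀ g₀ : W, ∃ ε > 0, ∃ C : ℝ,
      ∀ g₁ g₂ : W, dist g₁ g₀ < ε → dist g₂ g₀ < ε →
        ∀ j : Fin n,
          ‖InnerProductSpace.gramSchmidtNormed ℝ (v g₁) j - InnerProductSpace.gramSchmidtNormed ℝ (v g₂) j‖
            ≤ C * dist g₁ g₂ := by
  intro g₀
  haveI hwf : WellFoundedLT (Fin n) := inferInstance
  set L' : ℝ := max L 0 with hL'def
  have hL'0 : 0 ≤ L' := le_max_right _ _
  have hLip' : ∀ (j : Fin n) (g₁ g₂ : W), ‖v g₁ j - v g₂ j‖ ≤ L' * dist g₁ g₂ :=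
    fun j g₁ g₂ => le_trans (hLip j g₁ g₂)
      (mul_le_mul_of_nonneg_right (le_max_left _ _) dist_nonneg)
  set M : ℝ := (∑ k, ‖v g₀ k‖) + L' with hMdef
  have hM0 : 0 ≤ M := by
    rw [hMdef]
    exact add_nonneg (Finset.sum_nonneg fun k _ => norm_nonneg _) hL'0
  have hM : ∀ g : W, dist g g₀ < 1 → ∀ j : Fin n, ‖v g j‖ ≤ M := by
    intro g hg j
    calc ‖v g j‖ = ‖(v g j - v g₀ j) + v g₀ j‖ := by rw [sub_add_cancel]
      _ ≤ ‖v g j - v g₀ j‖ + ‖v g₀ j‖ := norm_add_le _ _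
      _ ≤ L' * dist g g₀ + ‖v g₀ j‖ := add_le_add (hLip' j g g₀) le_rfl
      _ ≤ L' * 1 + ∑ k, ‖v g₀ k‖ := add_le_add
          (mul_le_mul_of_nonneg_left hg.le hL'0)
          (Finset.single_le_sum (fun k _ => norm_nonneg _) (Finset.mem_univ j))
      _ = M := by rw [hMdef]; ring
  have hlow : ∀ (g : W) (j : Fin n), Real.sqrt lam ≤ ‖gramSchmidt ℝ (v g) j‖ := by
    intro g j
    have h := aux_gs_lower (v g) lam hlam.le (hGram g) j
    calc Real.sqrt lam ≤ Real.sqrt (‖gramSchmidt ℝ (v g) j‖ ^ 2) := Real.sqrt_le_sqrt h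
      _ = ‖gramSchmidt ℝ (v g) j‖ := Real.sqrt_sq (norm_nonneg _)
  have hs : 0 < Real.sqrt lam := Real.sqrt_pos.2 hlam
  have hne : ∀ (g : W) (i : Fin n), gramSchmidt ℝ (v g) i ≠ 0 := fun g i =>
    norm_ne_zero_iff.1 (ne_of_gt (lt_of_lt_of_le hs (hlow g i)))
  -- Lipschitz of normalization
  have hnorm_lip : ∀ (g₁ g₂ : W) (j : Fin n) (K : ℝ),
      ‖gramSchmidt ℝ (v g₁) j - gramSchmidt ℝ (v g₂) j‖ ≤ K →
      ‖gramSchmidtNormed ℝ (v g₁) j - gramSchmidtNormed ℝ (v g₂) j‖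
        ≤ (2 / Real.sqrt lam) * K := by
    intro g₁ g₂ j K hK
    have h := aux_norm_normalize_sub hs (hlow g₁ j) (hlow g₂ j)
    have hform : ∀ g : W, gramSchmidtNormed ℝ (v g) j
        = ‖gramSchmidt ℝ (v g) j‖⁻¹ • gramSchmidt ℝ (v g) j := by
      intro g
      simp [gramSchmidtNormed]
    rw [hform g₁, hform g₂]
    calc ‖‖gramSchmidt ℝ (v g₁) j‖⁻¹ • gramSchmidt ℝ (v g₁) j
          - ‖gramSchmidt ℝ (v g₂) j‖⁻¹ • gramSchmidt ℝ (v g₂) j‖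
        ≤ (2 / Real.sqrt lam) * ‖gramSchmidt ℝ (v g₁) j - gramSchmidt ℝ (v g₂) j‖ := h
      _ ≤ (2 / Real.sqrt lam) * K :=
          mul_le_mul_of_nonneg_left hK (by positivity)
  -- main induction
  have key : ∀ m : ℕ, ∀ j : Fin n, (j : ℕ) = m →
      ∃ C, 0 ≤ C ∧ ∀ g₁ g₂ : W, dist g₁ g₀ < 1 → dist g₂ g₀ < 1 →
        ‖gramSchmidtNormed ℝ (v g₁) j - gramSchmidtNormed ℝ (v g₂) j‖ ≤ C * dist g₁ g₂ := by
    intro m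
    induction m using Nat.strong_induction_on with
    | _ m IH =>
      intro j hj
      have hprev : ∀ i : Fin n, ∃ C, 0 ≤ C ∧ (i < j →
          ∀ g₁ g₂ : W, dist g₁ g₀ < 1 → dist g₂ g₀ < 1 →
            ‖gramSchmidtNormed ℝ (v g₁) i - gramSchmidtNormed ℝ (v g₂) i‖ ≤ C * dist g₁ g₂) := by
        intro i
        by_cases h : i < j
        · obtain ⟨C, hC0, hC⟩ := IH (i : ℕ) (by rw [← hj]; exact h) i rfl
          exact ⟨C, hC0, fun _ => hC⟩
        · exact ⟨0, le_refl 0, fun h' => absurd h' h⟩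
      choose Cp hCp0 hCp using hprev
      set Ku : ℝ := L' + ∑ i ∈ Finset.Iio j, (2 * M * Cp i + L') with hKudef
      have hKu0 : 0 ≤ Ku := by
        rw [hKudef]
        refine add_nonneg hL'0 (Finset.sum_nonneg fun i _ => ?_)
        exact add_nonneg (mul_nonneg (mul_nonneg (by norm_num) hM0) (hCp0 i)) hL'0
      refine ⟨2 / Real.sqrt lam * Ku, mul_nonneg (by positivity) hKu0, fun g₁ g₂ h₁ h₂ => ?_⟩
      have hulip : ‖gramSchmidt ℝ (v g₁) j - gramSchmidt ℝ (v g₂) j‖ ≤ Ku * dist g₁ g₂ := by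
        have hb := aux_gs_sub_bound (v g₁) (v g₂) j
          (M := M) (D := L' * dist g₁ g₂) (E := fun i => Cp i * dist g₁ g₂)
          (fun i _ => hne g₁ i) (fun i _ => hne g₂ i)
          (hM g₁ h₁) (hM g₂ h₂)
          (fun i => hLip' i g₁ g₂)
          (fun i hi => hCp i hi g₁ g₂ h₁ h₂)
        refine le_trans hb (le_of_eq ?_)
        rw [hKudef, add_mul, Finset.sum_mul]
        congr 1
        refine Finset.sum_congr rfl fun i _ => by ring
      calc ‖gramSchmidtNormed ℝ (v g₁) j - gramSchmidtNormed ℝ (v g₂) j‖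
          ≤ (2 / Real.sqrt lam) * (Ku * dist g₁ g₂) := hnorm_lip g₁ g₂ j _ hulip
        _ = 2 / Real.sqrt lam * Ku * dist g₁ g₂ := by ring
  have key' : ∀ j : Fin n, ∃ C, 0 ≤ C ∧ ∀ g₁ g₂ : W, dist g₁ g₀ < 1 → dist g₂ g₀ < 1 →
      ‖gramSchmidtNormed ℝ (v g₁) j - gramSchmidtNormed ℝ (v g₂) j‖ ≤ C * dist g₁ g₂ :=
    fun j => key (j : ℕ) j rfl
  choose Cf hCf0 hCf using key'
  refine ⟨1, one_pos, ∑ k, Cf k, fun g₁ g₂ h₁ h₂ j => ?_⟩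
  calc ‖gramSchmidtNormed ℝ (v g₁) j - gramSchmidtNormed ℝ (v g₂) j‖
      ≤ Cf j * dist g₁ g₂ := hCf j g₁ g₂ h₁ h₂
    _ ≤ (∑ k, Cf k) * dist g₁ g₂ :=
        mul_le_mul_of_nonneg_right
          (Finset.single_le_sum (fun k _ => hCf0 k) (Finset.mem_univ j)) dist_nonneg
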